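/- arXiv:2209.10092 — 5 statements merged into one kernel-verified Lean document; each statement's English description precedes it below -/
import Mathlib

section
/- For all real numbers a and b, the Lebesgue integral over the real line of the product (𝟙{a ≤ x} − 𝟙{−a < x})·(𝟙{b ≤ x} − 𝟙{−b < x}) with respect to x equals |a + b| − |a − b|. -/
open MeasureTheory

lemma factor_ae (a : ℝ) :
    (fun x : ℝ => (if a ≤ x then (1 : ℝ) else 0) - (if -a < x then (1 : ℝ) else 0))
      =ᵐ[volume]
    (fun x : ℝ => (if 0 < a then (-1 : ℝ) else 1) *
      (Set.Ioc (-|a|) |a|).indicator (fun _ => (1 : ℝ)) x) := by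
  have h1 : ∀ᵐ x : ℝ, x ≠ a := by
    rw [ae_iff]
    simpa using measure_singleton (α := ℝ) a
  filter_upwards [h1] with x hx
  have hx' : x < a ∨ a < x := hx.lt_or_gt
  rcases lt_or_ge 0 a with ha | ha
  · rw [abs_of_pos ha]
    rcases le_or_gt x (-a) with h | h
    · have c1 : ¬ a ≤ x := not_le.mpr (by linarith)
      simp [Set.indicator_apply, Set.mem_Ioc, c1, not_lt.mpr h]
    · rcases hx' with h2 | h2
      · simp [Set.indicator_apply, Set.mem_Ioc, not_le.mpr h2, h, h2.le, ha]
      · have c2 : -a < x := by linarith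
        simp [Set.indicator_apply, Set.mem_Ioc, h2.le, c2, not_le.mpr h2]
  · rw [abs_of_nonpos ha, neg_neg]
    rcases hx' with h2 | h2
    · have c1 : ¬ -a < x := not_lt.mpr (by linarith)
      simp [Set.indicator_apply, Set.mem_Ioc, not_le.mpr h2, c1, not_lt.mpr h2.le]
    · rcases le_or_gt x (-a) with h | h
      · simp [Set.indicator_apply, Set.mem_Ioc, h2.le, h2, not_lt.mpr h, h, not_lt.mpr ha]
      · simp [Set.indicator_apply, Set.mem_Ioc, h2.le, h, not_le.mpr h]


/-- For all real `a`, `b`, the Lebesgue integral over ℝ of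
`(𝟙{a ≤ x} − 𝟙{−a < x})·(𝟙{b ≤ x} − 𝟙{−b < x})` equals `|a + b| − |a − b|`. -/
theorem integral_indicator_prod_eq_abs_add_sub_abs_sub (a b : ℝ) :
    ∫ x : ℝ, (((if a ≤ x then (1 : ℝ) else 0) - (if -a < x then (1 : ℝ) else 0)) *
        ((if b ≤ x then (1 : ℝ) else 0) - (if -b < x then (1 : ℝ) else 0))) =
      |a + b| - |a - b| := by
  have hab := (factor_ae a).mul (factor_ae b)
  erw [integral_congr_ae hab]
  simp only [Pi.mul_apply]
  have key : (fun x : ℝ =>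
      ((if 0 < a then (-1 : ℝ) else 1) * (Set.Ioc (-|a|) |a|).indicator (fun _ => (1 : ℝ)) x) *
      ((if 0 < b then (-1 : ℝ) else 1) * (Set.Ioc (-|b|) |b|).indicator (fun _ => (1 : ℝ)) x)) =
      (Set.Ioc (-|a|) |a| ∩ Set.Ioc (-|b|) |b|).indicator
        (fun _ => (if 0 < a then (-1 : ℝ) else 1) * (if 0 < b then (-1 : ℝ) else 1)) := by
    funext x
    by_cases h1 : x ∈ Set.Ioc (-|a|) |a| <;> by_cases h2 : x ∈ Set.Ioc (-|b|) |b| <;>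
      simp [Set.indicator_apply, Set.mem_inter_iff, h1, h2] <;> ring
  have hinter : Set.Ioc (-|a|) |a| ∩ Set.Ioc (-|b|) |b| = Set.Ioc (-(min |a| |b|)) (min |a| |b|) := by
    rw [Set.Ioc_inter_Ioc]
    congr 1
    rcases le_total |a| |b| with h | h <;> simp [min_def, max_def, h, neg_le_neg h]
  have hm0 : (0 : ℝ) ≤ min |a| |b| := le_min (abs_nonneg a) (abs_nonneg b)
  rw [key, hinter, integral_indicator_const _ measurableSet_Ioc, measureReal_def, Real.volume_Ioc,
    (by ring : min |a| |b| - -(min |a| |b|) = 2 * min |a| |b|),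
    ENNReal.toReal_ofReal (by linarith), smul_eq_mul]
  rcases lt_or_ge 0 a with ha | ha <;> rcases lt_or_ge 0 b with hb | hb
  · rw [if_pos ha, if_pos hb, abs_of_pos ha, abs_of_pos hb]
    rcases le_total a b with g | g <;>
      [rw [min_eq_left g]; rw [min_eq_right g]] <;>
      rcases abs_cases (a + b) with ⟨e1, e2⟩ | ⟨e1, e2⟩ <;>
      rcases abs_cases (a - b) with ⟨f1, f2⟩ | ⟨f1, f2⟩ <;>
      rw [e1, f1] <;> linarith
  · rw [if_pos ha, if_neg (not_lt.mpr hb), abs_of_pos ha, abs_of_nonpos hb]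
    rcases le_total a (-b) with g | g <;>
      [rw [min_eq_left g]; rw [min_eq_right g]] <;>
      rcases abs_cases (a + b) with ⟨e1, e2⟩ | ⟨e1, e2⟩ <;>
      rcases abs_cases (a - b) with ⟨f1, f2⟩ | ⟨f1, f2⟩ <;>
      rw [e1, f1] <;> linarith
  · rw [if_neg (not_lt.mpr ha), if_pos hb, abs_of_nonpos ha, abs_of_pos hb]
    rcases le_total (-a) b with g | g <;>
      [rw [min_eq_left g]; rw [min_eq_right g]] <;>
      rcases abs_cases (a + b) with ⟨e1, e2⟩ | ⟨e1, e2⟩ <;>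
      rcases abs_cases (a - b) with ⟨f1, f2⟩ | ⟨f1, f2⟩ <;>
      rw [e1, f1] <;> linarith
  · rw [if_neg (not_lt.mpr ha), if_neg (not_lt.mpr hb), abs_of_nonpos ha, abs_of_nonpos hb]
    rcases le_total (-a) (-b) with g | g <;>
      [rw [min_eq_left g]; rw [min_eq_right g]] <;>
      rcases abs_cases (a + b) with ⟨e1, e2⟩ | ⟨e1, e2⟩ <;>
      rcases abs_cases (a - b) with ⟨f1, f2⟩ | ⟨f1, f2⟩ <;>
      rw [e1, f1] <;> linarith
end

section
/- Let S1 and S2 be finite nonempty disjoint sets with cardinalities n1 and n2, let g̃ assign a real value to each element, and let p1, p2 ∈ ℝ. Then the Cramér–von Mises distance L(S1,S2) = ∫_ℝ [ (1/n1) Σ_{s∈S1} (𝟙{g̃(s)−p1 ≤ x} − 𝟙{p1−g̃(s) < x}) ]² dx + ∫_ℝ [ (1/n2) Σ_{s∈S2} (𝟙{g̃(s)−p2 ≤ x} − 𝟙{p2−g̃(s) < x}) ]² dx (Lebesgue integrals) equals (1/n1²) Σ_{s∈S1} Σ_{t∈S1} f¹(s,t) + (1/n2²) Σ_{s∈S2}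 Σ_{t∈S2} f²(s,t), where f^k(s,t) = |(g̃(s) − p_k) + (g̃(t) − p_k)| − |g̃(s) − g̃(t)| for k = 1, 2. -/
open MeasureTheory Finset

section CvmAux
open Set

noncomputable def Fa (a x : ℝ) : ℝ :=
  (if a ≤ x then (1:ℝ) else 0) - (if -a < x then (1:ℝ) else 0)

lemma Fa_ae (a : ℝ) : Fa a =ᵐ[volume]
    fun x => (if a ≤ 0 then (1:ℝ) else -1) * (Ioo (-|a|) |a|).indicator 1 x := by
  have hnull : volume ({a, -a} : Set ℝ) = 0 :=
    measure_union_null Real.volume_singleton Real.volume_singleton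
  refine Filter.eventuallyEq_of_mem (s := ({a, -a} : Set ℝ)ᶜ) ?_ ?_
  · rw [mem_ae_iff, compl_compl]; exact hnull
  · intro x hx
    simp only [mem_compl_iff, mem_insert_iff, mem_singleton_iff, not_or] at hx
    obtain ⟨hx1, hx2⟩ := hx
    rcases le_or_gt a 0 with ha | ha
    · rw [abs_of_nonpos ha]
      simp only [if_pos ha, neg_neg, one_mul]
      by_cases hmem : x ∈ Ioo a (-a)
      · rw [indicator_of_mem hmem]
        obtain ⟨hl, hr⟩ := hmem
        simp [Fa, hl.le, not_lt.mpr hr.le]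
      · rw [indicator_of_notMem hmem]
        rw [Set.mem_Ioo, not_and_or] at hmem
        rcases hmem with h | h
        · push_neg at h
          have hxa : x < a := lt_of_le_of_ne h hx1
          have : ¬ (-a < x) := by push_neg; linarith
          simp [Fa, not_le.mpr hxa, this]
        · push_neg at h
          have hax : -a < x := lt_of_le_of_ne h (Ne.symm hx2)
          have : a ≤ x := by linarith
          simp [Fa, this, hax]
    · rw [abs_of_pos ha]
      simp only [if_neg (not_le.mpr ha)]
      by_cases hmem : x ∈ Ioo (-a) a
      · rw [indicator_of_mem hmem]
        obtain ⟨hl, hr⟩ := hmem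
        simp [Fa, not_le.mpr hr, hl]
      · rw [indicator_of_notMem hmem]
        rw [Set.mem_Ioo, not_and_or] at hmem
        rcases hmem with h | h
        · push_neg at h
          have hxa : x < -a := lt_of_le_of_ne h hx2
          have h1 : ¬ a ≤ x := by push_neg; linarith
          have h2 : ¬ (-a < x) := not_lt.mpr hxa.le
          simp [Fa, h1, h2]
        · push_neg at h
          have hax : a < x := lt_of_le_of_ne h (Ne.symm hx1)
          have : -a < x := by linarith
          simp [Fa, hax.le, this]

lemma Fa_mul_ae (a b : ℝ) : (fun x => Fa a x * Fa b x) =ᵐ[volume]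
    fun x => ((if a ≤ 0 then (1:ℝ) else -1) * (if b ≤ 0 then (1:ℝ) else -1)) *
      (Ioo (-(min |a| |b|)) (min |a| |b|)).indicator 1 x := by
  filter_upwards [Fa_ae a, Fa_ae b] with x hxa hxb
  rw [hxa, hxb]
  have : Ioo (-(min |a| |b|)) (min |a| |b|) = Ioo (-|a|) |a| ∩ Ioo (-|b|) |b| := by
    rw [Set.Ioo_inter_Ioo, max_neg_neg]
  rw [this, inter_indicator_one]
  simp only [Pi.mul_apply, Pi.one_apply]
  ring

lemma Fa_mul_integrable (a b : ℝ) : Integrable (fun x => Fa a x * Fa b x) := by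
  refine (Integrable.const_mul ?_ _).congr (Fa_mul_ae a b).symm
  rw [integrable_indicator_iff measurableSet_Ioo]
  exact (integrableOn_const_iff (C := (1:ℝ))).mpr (Or.inr measure_Ioo_lt_top)

lemma Fa_mul_integral (a b : ℝ) :
    ∫ x, Fa a x * Fa b x = |a + b| - |a - b| := by
  rw [integral_congr_ae (Fa_mul_ae a b), integral_const_mul,
    integral_indicator_one measurableSet_Ioo, Real.volume_real_Ioo]
  have hm : (0:ℝ) ≤ min |a| |b| := le_min (abs_nonneg a) (abs_nonneg b)
  rw [show min |a| |b| - -(min |a| |b|) = 2 * min |a| |b| by ring,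
    max_eq_left (by linarith : (0:ℝ) ≤ 2 * min |a| |b|)]
  rcases le_or_gt a 0 with ha | ha <;> rcases le_or_gt b 0 with hb | hb
  · simp only [if_pos ha, if_pos hb]
    rw [abs_of_nonpos ha, abs_of_nonpos hb, abs_of_nonpos (by linarith : a + b ≤ 0)]
    rcases le_total a b with h | h
    · rw [min_eq_right (by linarith), abs_of_nonpos (by linarith : a - b ≤ 0)]; ring
    · rw [min_eq_left (by linarith), abs_of_nonneg (by linarith : (0:ℝ) ≤ a - b)]; ring
  · simp only [if_pos ha, if_neg (not_le.mpr hb)]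
    rw [abs_of_nonpos ha, abs_of_pos hb, abs_of_nonpos (by linarith : a - b ≤ 0)]
    rcases le_total (-a) b with h | h
    · rw [min_eq_left h]
      rcases abs_cases (a + b) with ⟨h1, _⟩ | ⟨h1, _⟩ <;> rw [h1] <;> ring_nf <;> linarith
    · rw [min_eq_right h]
      rcases abs_cases (a + b) with ⟨h1, _⟩ | ⟨h1, _⟩ <;> rw [h1] <;> ring_nf <;> linarith
  · simp only [if_neg (not_le.mpr ha), if_pos hb]
    rw [abs_of_pos ha, abs_of_nonpos hb, abs_of_nonneg (by linarith : (0:ℝ) ≤ a - b)]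
    rcases le_total a (-b) with h | h
    · rw [min_eq_left h]
      rcases abs_cases (a + b) with ⟨h1, _⟩ | ⟨h1, _⟩ <;> rw [h1] <;> ring_nf <;> linarith
    · rw [min_eq_right h]
      rcases abs_cases (a + b) with ⟨h1, _⟩ | ⟨h1, _⟩ <;> rw [h1] <;> ring_nf <;> linarith
  · simp only [if_neg (not_le.mpr ha), if_neg (not_le.mpr hb)]
    rw [abs_of_pos ha, abs_of_pos hb, abs_of_nonneg (by linarith : (0:ℝ) ≤ a + b)]
    rcases le_total a b with h | h
    · rw [min_eq_left (by linarith), abs_of_nonpos (by linarith : a - b ≤ 0)]; ring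
    · rw [min_eq_right (by linarith), abs_of_nonneg (by linarith : (0:ℝ) ≤ a - b)]; ring

lemma seg {α : Type*} (S : Finset α) (g : α → ℝ) (p : ℝ) :
    (∫ x : ℝ, ((1 / (S.card : ℝ)) *
        ∑ s ∈ S, ((if g s - p ≤ x then (1 : ℝ) else 0) -
          (if p - g s < x then (1 : ℝ) else 0))) ^ 2) =
    (1 / (S.card : ℝ) ^ 2) *
        ∑ s ∈ S, ∑ t ∈ S, (|(g s - p) + (g t - p)| - |g s - g t|) := by
  have hF : ∀ (s : α) (x : ℝ), ((if g s - p ≤ x then (1 : ℝ) else 0) -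
      (if p - g s < x then (1 : ℝ) else 0)) = Fa (g s - p) x := by
    intro s x; rw [Fa, neg_sub]
  have step : ∀ x : ℝ, ((1 / (S.card : ℝ)) *
      ∑ s ∈ S, ((if g s - p ≤ x then (1 : ℝ) else 0) -
        (if p - g s < x then (1 : ℝ) else 0))) ^ 2 =
      (1 / (S.card : ℝ) ^ 2) * ∑ s ∈ S, ∑ t ∈ S, Fa (g s - p) x * Fa (g t - p) x := by
    intro x
    simp_rw [hF]
    rw [mul_pow, sq (∑ s ∈ S, Fa (g s - p) x), Finset.sum_mul_sum]
    rw [one_div, one_div, inv_pow]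
  simp only [step]
  rw [integral_const_mul]
  rw [integral_finset_sum _ (fun s _ => integrable_finset_sum _ (fun t _ => Fa_mul_integrable _ _))]
  congr 1
  refine Finset.sum_congr rfl (fun s _ => ?_)
  rw [integral_finset_sum _ (fun t _ => Fa_mul_integrable _ _)]
  refine Finset.sum_congr rfl (fun t _ => ?_)
  rw [Fa_mul_integral, show g s - p - (g t - p) = g s - g t by ring]

end CvmAux

/-- Closed-form simplification of the Cramér–von Mises distance with `H(x) = x`:
the sum of the two integrated squared empirical-process terms equals the
double-sum expression with `f^k(s,t) = |(g̃(s)−p_k)+(g̃(t)−p_k)| − |g̃(s)−g̃(t)|`. -/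
theorem cvm_distance_simpler_form {α : Type*} (S1 S2 : Finset α)
    (h1 : S1.Nonempty) (h2 : S2.Nonempty) (hdisj : Disjoint S1 S2)
    (g : α → ℝ) (p1 p2 : ℝ) :
    (∫ x : ℝ, ((1 / (S1.card : ℝ)) *
        ∑ s ∈ S1, ((if g s - p1 ≤ x then (1 : ℝ) else 0) -
          (if p1 - g s < x then (1 : ℝ) else 0))) ^ 2) +
    (∫ x : ℝ, ((1 / (S2.card : ℝ)) *
        ∑ s ∈ S2, ((if g s - p2 ≤ x then (1 : ℝ) else 0) -
          (if p2 - g s < x then (1 : ℝ) else 0))) ^ 2) =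
      (1 / (S1.card : ℝ) ^ 2) *
        ∑ s ∈ S1, ∑ t ∈ S1, (|(g s - p1) + (g t - p1)| - |g s - g t|) +
      (1 / (S2.card : ℝ) ^ 2) *
        ∑ s ∈ S2, ∑ t ∈ S2, (|(g s - p2) + (g t - p2)| - |g s - g t|) := by
  rw [seg S1 g p1, seg S2 g p2]
end

section
/- Let (Ω, P) be a probability space, S a finite set, and suppose the observed values are g̃(s) = c_s + ε_s where the true values satisfy c_s ∈ [0,1] for all s ∈ S and the noise variables (ε_s)_{s∈S} are independent, identically distributed and integrable with m = E|ε|. Let p1, p2 ∈ [0,1]. Then for every η > 0, with B = (4m + 4)/η, every partition of S into nonempty disjoint sets (S1, S2) satisfies P(|L(S1,S2)| ≤ B) ≥ 1 − η, where L(S1,S2) = (1/|S1|²) Σ_{s,t∈S1} f¹(s,t) + (1/|S2|²) Σ_{s,t∈S2} f²(s,t) and f^k(s,t) = |(g̃(s) − p_k) + (g̃(t) − p_k)| − |g̃(s) − g̃(t)|. -/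
open MeasureTheory ProbabilityTheory Finset

lemma cvm_abs_helper (u v : ℝ) : |(|u + v| - |u - v|)| ≤ |u| + |v| := by
  have h1 : |(|u + v| - |u - v|)| ≤ |(u + v) - (u - v)| := abs_abs_sub_abs_le_abs_sub _ _
  have h2 : |(|u + v| - |u - v|)| ≤ |(u + v) - (v - u)| := by
    rw [abs_sub_comm u v]; exact abs_abs_sub_abs_le_abs_sub _ _
  have e1 : (u + v) - (u - v) = 2 * v := by ring
  have e2 : (u + v) - (v - u) = 2 * u := by ring
  rw [e1, abs_mul] at h1
  rw [e2, abs_mul] at h2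
  have : |(2:ℝ)| = 2 := by norm_num
  rw [this] at h1 h2
  linarith

lemma cvm_part_bound {α : Type*} (A : Finset α) (hA : A.Nonempty) (x a : α → ℝ) (p : ℝ)
    (hx : ∀ s ∈ A, |x s - p| ≤ 1 + a s) :
    |(1 / (A.card : ℝ) ^ 2) * ∑ s ∈ A, ∑ t ∈ A, (|(x s - p) + (x t - p)| - |x s - x t|)| ≤
      2 + (2 / (A.card : ℝ)) * ∑ s ∈ A, a s := by
  have hn : (0:ℝ) < A.card := by exact_mod_cast Finset.card_pos.mpr hA
  have key : |∑ s ∈ A, ∑ t ∈ A, (|(x s - p) + (x t - p)| - |x s - x t|)| ≤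
      ∑ s ∈ A, ∑ t ∈ A, ((1 + a s) + (1 + a t)) := by
    refine (Finset.abs_sum_le_sum_abs _ _).trans (Finset.sum_le_sum fun s hs => ?_)
    refine (Finset.abs_sum_le_sum_abs _ _).trans (Finset.sum_le_sum fun t ht => ?_)
    have e : x s - x t = (x s - p) - (x t - p) := by ring
    rw [e]
    exact (cvm_abs_helper _ _).trans (add_le_add (hx s hs) (hx t ht))
  have sums : ∑ s ∈ A, ∑ t ∈ A, ((1 + a s) + (1 + a t))
      = 2 * (A.card : ℝ) ^ 2 + 2 * A.card * ∑ s ∈ A, a s := by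
    simp [Finset.sum_add_distrib, Finset.sum_const, ← Finset.mul_sum]
    ring
  rw [abs_mul]
  have h1 : |1 / (A.card : ℝ) ^ 2| = 1 / (A.card : ℝ) ^ 2 := abs_of_pos (by positivity)
  rw [h1]
  calc 1 / (A.card : ℝ) ^ 2 * |∑ s ∈ A, ∑ t ∈ A, (|(x s - p) + (x t - p)| - |x s - x t|)|
      ≤ 1 / (A.card : ℝ) ^ 2 * (2 * (A.card : ℝ) ^ 2 + 2 * A.card * ∑ s ∈ A, a s) := by
        rw [← sums]; exact mul_le_mul_of_nonneg_left key (by positivity)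
    _ = 2 + (2 / (A.card : ℝ)) * ∑ s ∈ A, a s := by field_simp


/-- Uniform-in-partitions boundedness in probability (Theorem 1): with
`g̃(s) = c_s + ε_s`, `c_s, p1, p2 ∈ [0,1]` and i.i.d. integrable noise with
`m = E|ε|`, for every `η > 0` and `B = (4m + 4)/η`, every partition `(S1,S2)`
of `S` into nonempty disjoint sets satisfies `P(|L(S1,S2)| ≤ B) ≥ 1 − η`. -/
theorem cvm_distance_bounded_in_probability
    {Ω : Type*} [MeasurableSpace Ω] (μ : Measure Ω) [IsProbabilityMeasure μ]
    {α : Type*} [DecidableEq α] (S : Finset α)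
    (c : α → ℝ) (hc : ∀ s ∈ S, c s ∈ Set.Icc (0 : ℝ) 1)
    (p1 p2 : ℝ) (hp1 : p1 ∈ Set.Icc (0 : ℝ) 1) (hp2 : p2 ∈ Set.Icc (0 : ℝ) 1)
    (ε : α → Ω → ℝ) (ε₀ : Ω → ℝ)
    (hmeas : ∀ s, Measurable (ε s)) (hmeas₀ : Measurable ε₀)
    (hindep : iIndepFun ε μ)
    (hident : ∀ s ∈ S, μ.map (ε s) = μ.map ε₀)
    (hint : Integrable ε₀ μ)
    (g : α → Ω → ℝ) (hg : ∀ s ∈ S, g s = fun ω => c s + ε s ω)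
    (η : ℝ) (hη : 0 < η) :
    ∀ S1 S2 : Finset α, S1.Nonempty → S2.Nonempty → Disjoint S1 S2 → S1 ∪ S2 = S →
      ENNReal.ofReal (1 - η) ≤
        μ {ω | |(1 / (S1.card : ℝ) ^ 2) *
            ∑ s ∈ S1, ∑ t ∈ S1, (|(g s ω - p1) + (g t ω - p1)| - |g s ω - g t ω|) +
          (1 / (S2.card : ℝ) ^ 2) *
            ∑ s ∈ S2, ∑ t ∈ S2, (|(g s ω - p2) + (g t ω - p2)| - |g s ω - g t ω|)| ≤
          (4 * (∫ ω, |ε₀ ω| ∂μ) + 4) / η} := by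
  intro S1 S2 h1 h2 hdisj hunion
  have hS1 : S1 ⊆ S := hunion ▸ Finset.subset_union_left
  have hS2 : S2 ⊆ S := hunion ▸ Finset.subset_union_right
  set m := ∫ ω, |ε₀ ω| ∂μ with hm
  have hm0 : 0 ≤ m := integral_nonneg fun ω => abs_nonneg _
  set B := (4 * m + 4) / η with hBdef
  have hBpos : 0 < B := div_pos (by linarith) hη
  have hn1 : (0:ℝ) < S1.card := by exact_mod_cast Finset.card_pos.mpr h1
  have hn2 : (0:ℝ) < S2.card := by exact_mod_cast Finset.card_pos.mpr h2
  -- integrability and mean of |ε s|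
  have habs : ∀ s ∈ S, Integrable (fun ω => |ε s ω|) μ ∧ ∫ ω, |ε s ω| ∂μ = m := by
    intro s hs
    have hmap := hident s hs
    have hid : Integrable id (μ.map (ε s)) := by
      rw [hmap]
      exact (integrable_map_measure aestronglyMeasurable_id hmeas₀.aemeasurable).mpr hint
    have hint_s : Integrable (ε s) μ :=
      (integrable_map_measure aestronglyMeasurable_id (hmeas s).aemeasurable).mp hid
    refine ⟨hint_s.abs, ?_⟩
    have e1 : ∫ y, |y| ∂(μ.map (ε s)) = ∫ ω, |ε s ω| ∂μ :=
      integral_map (hmeas s).aemeasurable measurable_abs.aestronglyMeasurable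
    have e2 : ∫ y, |y| ∂(μ.map ε₀) = ∫ ω, |ε₀ ω| ∂μ :=
      integral_map hmeas₀.aemeasurable measurable_abs.aestronglyMeasurable
    rw [← e1, hmap, e2]
  -- the dominating function
  set X : Ω → ℝ := fun ω =>
    4 + (2 / (S1.card : ℝ)) * ∑ s ∈ S1, |ε s ω| + (2 / (S2.card : ℝ)) * ∑ s ∈ S2, |ε s ω|
    with hXdef
  have hXint : Integrable X μ := by
    refine Integrable.add (Integrable.add (integrable_const 4) ?_) ?_
    · exact (integrable_finset_sum S1 fun s hs => (habs s (hS1 hs)).1).const_mul _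
    · exact (integrable_finset_sum S2 fun s hs => (habs s (hS2 hs)).1).const_mul _
  have hXval : ∫ ω, X ω ∂μ = 4 + 4 * m := by
    have i1 : Integrable (fun ω => (2 / (S1.card : ℝ)) * ∑ s ∈ S1, |ε s ω|) μ :=
      (integrable_finset_sum S1 fun s hs => (habs s (hS1 hs)).1).const_mul _
    have i2 : Integrable (fun ω => (2 / (S2.card : ℝ)) * ∑ s ∈ S2, |ε s ω|) μ :=
      (integrable_finset_sum S2 fun s hs => (habs s (hS2 hs)).1).const_mul _
    have i0 : Integrable (fun ω => 4 + (2 / (S1.card : ℝ)) * ∑ s ∈ S1, |ε s ω|) μ :=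
      (integrable_const 4).add i1
    rw [hXdef]
    rw [integral_add i0 i2, integral_add (integrable_const 4) i1,
      integral_const, integral_const_mul, integral_const_mul,
      integral_finset_sum _ (fun s hs => (habs s (hS1 hs)).1),
      integral_finset_sum _ (fun s hs => (habs s (hS2 hs)).1)]
    rw [Finset.sum_congr rfl (fun s hs => (habs s (hS1 hs)).2),
      Finset.sum_congr rfl (fun s hs => (habs s (hS2 hs)).2)]
    simp [Finset.sum_const, nsmul_eq_mul]
    field_simp
    ring
  have hXmeas : Measurable X := by
    apply Measurable.add
    apply Measurable.add measurable_const
    · exact (Finset.measurable_sum S1 fun s _ => (hmeas s).abs).const_mul _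
    · exact (Finset.measurable_sum S2 fun s _ => (hmeas s).abs).const_mul _
  have hXnonneg : ∀ ω, 0 ≤ X ω := by
    intro ω
    have a1 : (0:ℝ) ≤ ∑ s ∈ S1, |ε s ω| := Finset.sum_nonneg fun s _ => abs_nonneg _
    have a2 : (0:ℝ) ≤ ∑ s ∈ S2, |ε s ω| := Finset.sum_nonneg fun s _ => abs_nonneg _
    have : (0:ℝ) ≤ 2 / (S1.card : ℝ) := by positivity
    have : (0:ℝ) ≤ 2 / (S2.card : ℝ) := by positivity
    simp only [hXdef]
    positivity
  -- pointwise bound |L ω| ≤ X ω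
  have hpoint : ∀ ω, |(1 / (S1.card : ℝ) ^ 2) *
            ∑ s ∈ S1, ∑ t ∈ S1, (|(g s ω - p1) + (g t ω - p1)| - |g s ω - g t ω|) +
          (1 / (S2.card : ℝ) ^ 2) *
            ∑ s ∈ S2, ∑ t ∈ S2, (|(g s ω - p2) + (g t ω - p2)| - |g s ω - g t ω|)| ≤ X ω := by
    intro ω
    have hb : ∀ (A : Finset α) (p : ℝ), A ⊆ S → p ∈ Set.Icc (0:ℝ) 1 →
        ∀ s ∈ A, |g s ω - p| ≤ 1 + |ε s ω| := by
      intro A p hAS hp s hs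
      rw [hg s (hAS hs)]
      obtain ⟨hc0, hc1⟩ := hc s (hAS hs)
      obtain ⟨hp0, hp1'⟩ := hp
      have e : c s + ε s ω - p = (c s - p) + ε s ω := by ring
      rw [e]
      calc |(c s - p) + ε s ω| ≤ |c s - p| + |ε s ω| := abs_add_le _ _
        _ ≤ 1 + |ε s ω| := by
            have : |c s - p| ≤ 1 := abs_le.mpr ⟨by linarith, by linarith⟩
            linarith
    have b1 := cvm_part_bound S1 h1 (fun s => g s ω) (fun s => |ε s ω|) p1
      (hb S1 p1 hS1 hp1)
    have b2 := cvm_part_bound S2 h2 (fun s => g s ω) (fun s => |ε s ω|) p2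
      (hb S2 p2 hS2 hp2)
    calc _ ≤ |(1 / (S1.card : ℝ) ^ 2) *
            ∑ s ∈ S1, ∑ t ∈ S1, (|(g s ω - p1) + (g t ω - p1)| - |g s ω - g t ω|)| +
          |(1 / (S2.card : ℝ) ^ 2) *
            ∑ s ∈ S2, ∑ t ∈ S2, (|(g s ω - p2) + (g t ω - p2)| - |g s ω - g t ω|)| :=
        abs_add_le _ _
      _ ≤ X ω := by
        simp only [hXdef]
        have := add_le_add b1 b2
        linarith [this]
  -- Markov
  have markov := mul_meas_ge_le_integral_of_nonneg (μ := μ)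
    (Filter.Eventually.of_forall hXnonneg) hXint B
  rw [hXval] at markov
  have hBη : B * η = 4 + 4 * m := by
    rw [hBdef]; field_simp; ring
  have htR : (μ {x | B ≤ X x}).toReal ≤ η := by
    have : B * (μ {x | B ≤ X x}).toReal ≤ B * η := by rw [hBη]; exact markov
    exact le_of_mul_le_mul_left this hBpos
  have hμle : μ {x | B ≤ X x} ≤ ENNReal.ofReal η :=
    (ENNReal.le_ofReal_iff_toReal_le (measure_ne_top μ _) hη.le).mpr htR
  have hsetmeas : MeasurableSet {x | B ≤ X x} := measurableSet_le measurable_const hXmeas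
  have hsub : {x | B ≤ X x}ᶜ ⊆ {ω | |(1 / (S1.card : ℝ) ^ 2) *
            ∑ s ∈ S1, ∑ t ∈ S1, (|(g s ω - p1) + (g t ω - p1)| - |g s ω - g t ω|) +
          (1 / (S2.card : ℝ) ^ 2) *
            ∑ s ∈ S2, ∑ t ∈ S2, (|(g s ω - p2) + (g t ω - p2)| - |g s ω - g t ω|)| ≤ B} := by
    intro ω hω
    simp only [Set.mem_compl_iff, Set.mem_setOf_eq, not_le] at hω ⊢
    exact (hpoint ω).trans hω.le
  calc ENNReal.ofReal (1 - η) = 1 - ENNReal.ofReal η := by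
        rw [ENNReal.ofReal_sub 1 hη.le, ENNReal.ofReal_one]
    _ ≤ 1 - μ {x | B ≤ X x} := tsub_le_tsub_left hμle 1
    _ = μ ({x | B ≤ X x}ᶜ) := (prob_compl_eq_one_sub hsetmeas).symm
    _ ≤ _ := measure_mono hsub
end

section
/- Let S1 and S2 be finite disjoint sets, h, k ∈ S1 distinct, g̃ real-valued on S1 ∪ S2 and p1, p2 ∈ ℝ. With f^m(s,t) = |(g̃(s) − p_m) + (g̃(t) − p_m)| − |g̃(s) − g̃(t)| for m = 1, 2, L̃(A,B) = Σ_{s∈A} Σ_{t∈A} f¹(s,t) + Σ_{s∈B} Σ_{t∈B} f²(s,t), and unnormalized netgains ÑG(h; S1) = L̃(S1\{h}, S2 ∪ {h}) − L̃(S1, S2) and ÑG(h; S1\{k}) = L̃(S1\{h,k}, S2 ∪ {h,k}) − L̃(S1\{k}, S2 ∪ {k}), one has ÑG(h; S1\{k}) − ÑG(h; S1) = 2(f¹(h,k) + f²(h,k)). -/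
open Finset

lemma Q_erase {α : Type*} [DecidableEq α] (f : α → α → ℝ) (A : Finset α) {x : α}
    (hx : x ∈ A) :
    ∑ s ∈ A.erase x, ∑ t ∈ A.erase x, f s t =
      (∑ s ∈ A, ∑ t ∈ A, f s t) - (∑ t ∈ A, f x t) - (∑ s ∈ A, f s x) + f x x := by
  have h1 : ∑ s ∈ A.erase x, ∑ t ∈ A.erase x, f s t
      = ∑ s ∈ A.erase x, ((∑ t ∈ A, f s t) - f s x) :=
    Finset.sum_congr rfl fun s _ => Finset.sum_erase_eq_sub hx
  rw [h1, Finset.sum_sub_distrib, Finset.sum_erase_eq_sub (f := fun s => ∑ t ∈ A, f s t) hx,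
    Finset.sum_erase_eq_sub (f := fun s => f s x) hx]
  ring

lemma Q_insert {α : Type*} [DecidableEq α] (f : α → α → ℝ) (B : Finset α) {x : α}
    (hx : x ∉ B) :
    ∑ s ∈ insert x B, ∑ t ∈ insert x B, f s t =
      (∑ s ∈ B, ∑ t ∈ B, f s t) + (∑ t ∈ B, f x t) + (∑ s ∈ B, f s x) + f x x := by
  rw [Finset.sum_insert hx, Finset.sum_insert hx]
  have h1 : ∑ s ∈ B, ∑ t ∈ insert x B, f s t
      = ∑ s ∈ B, (f s x + ∑ t ∈ B, f s t) :=
    Finset.sum_congr rfl fun s _ => Finset.sum_insert hx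
  rw [h1, Finset.sum_add_distrib]
  ring

/-- Exact perturbation identity for unnormalized netgains: removing a further
pixel `k` changes the netgain of `h` by exactly `2(f¹(h,k) + f²(h,k))`. -/
theorem unnormalized_netgain_perturbation {α : Type*} [DecidableEq α]
    (S1 S2 : Finset α) (hdisj : Disjoint S1 S2)
    (h k : α) (hh : h ∈ S1) (hk : k ∈ S1) (hne : h ≠ k)
    (g : α → ℝ) (p1 p2 : ℝ) (f1 f2 : α → α → ℝ)
    (hf1 : f1 = fun s t => |(g s - p1) + (g t - p1)| - |g s - g t|)
    (hf2 : f2 = fun s t => |(g s - p2) + (g t - p2)| - |g s - g t|)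
    (Lt : Finset α → Finset α → ℝ)
    (hLt : Lt = fun A B => ∑ s ∈ A, ∑ t ∈ A, f1 s t + ∑ s ∈ B, ∑ t ∈ B, f2 s t) :
    (Lt (S1 \ {h, k}) (S2 ∪ {h, k}) - Lt (S1.erase k) (insert k S2)) -
      (Lt (S1.erase h) (insert h S2) - Lt S1 S2) =
      2 * (f1 h k + f2 h k) := by
  subst hLt
  have hhS2 : h ∉ S2 := Finset.disjoint_left.mp hdisj hh
  have hkS2 : k ∉ S2 := Finset.disjoint_left.mp hdisj hk
  have hh' : h ∈ S1.erase k := Finset.mem_erase.mpr ⟨hne, hh⟩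
  have hhk : h ∉ insert k S2 := by simp [hne, hhS2]
  have hset1 : S1 \ {h, k} = (S1.erase k).erase h := by
    ext a; simp [not_or]; tauto
  have hset2 : S2 ∪ {h, k} = insert h (insert k S2) := by
    ext a; simp [or_comm, or_left_comm]
  have hsym1 : f1 k h = f1 h k := by subst hf1; simp [abs_sub_comm, add_comm]
  have hsym2 : f2 k h = f2 h k := by subst hf2; simp [abs_sub_comm, add_comm]
  simp only [hset1, hset2]
  rw [Q_erase f1 _ hh', Q_erase f1 _ hk, Q_erase f1 _ hh,
    Q_insert f2 _ hhk, Q_insert f2 _ hkS2, Q_insert f2 _ hhS2,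
    Finset.sum_erase_eq_sub (f := fun t => f1 h t) hk,
    Finset.sum_erase_eq_sub (f := fun s => f1 s h) hk,
    Finset.sum_insert hkS2, Finset.sum_insert hkS2]
  ring_nf
  rw [hsym1, hsym2]
  ring
end

section
/- Let S be a finite set and for finite subsets A, B of S define δ(A,B) = ||A| − |B|| if A ⊆ B or B ⊆ A; δ(A,B) = max(|A|, |B|) if A ∩ B = ∅; and δ(A,B) = max(|A| − |A∩B|, |B| − |A∩B|) otherwise. Then δ is a metric on the collection of subsets of S: (1) δ(A,B) = 0 if and only if A = B; (2) δ(A,B) = δ(B,A) for all A, B; (3) δ(A,B) ≤ δ(A,C) + δ(C,B) for all A, B, C ⊆ S. -/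
open Finset

/-- The segmentation distance `δ` between subsets of a finite pixel set:
`δ(A,B) = ||A| − |B||` if one set contains the other, `δ(A,B) = max(|A|,|B|)`
if the sets are disjoint, and `δ(A,B) = max(|A| − |A∩B|, |B| − |A∩B|)`
otherwise. -/
def segDist {α : Type*} [DecidableEq α] (A B : Finset α) : ℕ :=
  if A ⊆ B ∨ B ⊆ A then max A.card B.card - min A.card B.card
  else if A ∩ B = ∅ then max A.card B.card
  else max (A.card - (A ∩ B).card) (B.card - (A ∩ B).card)

private lemma card_sdiff_eq' {α : Type*} [DecidableEq α] (A B : Finset α) :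
    (A \ B).card = A.card - (A ∩ B).card := by
  rw [← sdiff_inter_self_left A B, card_sdiff_of_subset (inter_subset_left)]

private lemma segDist_eq {α : Type*} [DecidableEq α] (A B : Finset α) :
    segDist A B = max (A \ B).card (B \ A).card := by
  rw [segDist, card_sdiff_eq', card_sdiff_eq', inter_comm B A]
  split_ifs with h h'
  · rcases h with h | h
    · have hc : A.card ≤ B.card := card_le_card h
      have hi : A ∩ B = A := inter_eq_left.mpr h
      rw [hi]
      omega
    · have hc : B.card ≤ A.card := card_le_card h
      have hi : A ∩ B = B := inter_eq_right.mpr h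
      rw [hi]
      omega
  · rw [h', card_empty]
    omega
  · rfl

/-- `δ` is a valid metric on the collection of subsets of a finite set `S`:
it vanishes exactly on equal pairs, is symmetric, and satisfies the triangle
inequality. -/
theorem segDist_is_metric {α : Type*} [DecidableEq α] (S : Finset α) :
    (∀ A B : Finset α, A ⊆ S → B ⊆ S → (segDist A B = 0 ↔ A = B)) ∧
    (∀ A B : Finset α, A ⊆ S → B ⊆ S → segDist A B = segDist B A) ∧
    (∀ A B C : Finset α, A ⊆ S → B ⊆ S → C ⊆ S →
      segDist A B ≤ segDist A C + segDist C B) := by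
  refine ⟨?_, ?_, ?_⟩
  · intro A B _ _
    rw [segDist_eq]
    constructor
    · intro h
      have h1 : (A \ B).card = 0 := by omega
      have h2 : (B \ A).card = 0 := by omega
      have h1' : A \ B = ∅ := card_eq_zero.mp h1
      have h2' : B \ A = ∅ := card_eq_zero.mp h2
      exact subset_antisymm (sdiff_eq_empty_iff_subset.mp h1')
        (sdiff_eq_empty_iff_subset.mp h2')
    · rintro rfl
      simp
  · intro A B _ _
    rw [segDist_eq, segDist_eq, max_comm]
  · intro A B C _ _ _
    rw [segDist_eq, segDist_eq, segDist_eq]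
    have key : ∀ X Y Z : Finset α, (X \ Y).card ≤ (X \ Z).card + (Z \ Y).card := by
      intro X Y Z
      calc (X \ Y).card ≤ ((X \ Z) ∪ (Z \ Y)).card := by
            apply card_le_card
            intro x hx
            simp only [mem_sdiff, mem_union] at *
            by_cases hz : x ∈ Z <;> tauto
        _ ≤ (X \ Z).card + (Z \ Y).card := card_union_le _ _
    have h1 := key A B C
    have h2 := key B A C
    have a1 : (A \ C).card ≤ max (A \ C).card (C \ A).card := le_max_left _ _
    have a2 : (C \ A).card ≤ max (A \ C).card (C \ A).card := le_max_right _ _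
    have b1 : (C \ B).card ≤ max (C \ B).card (B \ C).card := le_max_left _ _
    have b2 : (B \ C).card ≤ max (C \ B).card (B \ C).card := le_max_right _ _
    omega
end
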